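/- Suppose the matrix A ∈ ℝ^{M×N} satisfies: (a) the balanced null-space condition: for every w in ker(A) and every 𝒦 ⊆ {1,…,N-1} with |𝒦| ≤ δN, ‖(Dw)_𝒦‖₁ ≤ C‖(Dw)_{𝒦ᶜ}‖₁ with constant 0 < C < 1; (b) the almost-Euclidean property: ‖Dw‖₁ ≥ β√N‖w‖₂ for all w ∈ ker(A); and (c) σ_min := the smallest singular value of A restricted to the range of Aᵀ is positive. Let y satisfy ‖Ax - y‖₂ ≤ ε and let x̂ minimize ‖Dz‖₁ subject to ‖Az - y‖₂ ≤ ε. Then ‖x - x̂‖₂ ≤ (2(1+C)/(β(1-C))) · min_{|𝒦|≤δN} ‖(Dx)_{𝒦ᶜ}‖₁/√N + (2 + 4(1+C)/(β(1-C))) · ε/σ_min. -/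

import Mathlib

open Finset Matrix

/-- Finite difference operator: `(Df x) i = x (i+1) - x i`. -/
noncomputable def Df {N : ℕ} (x : Fin N → ℝ) : Fin (N - 1) → ℝ :=
  fun i => x ⟨i.val + 1, by have := i.isLt; omega⟩ - x ⟨i.val, by have := i.isLt; omega⟩

noncomputable def l1 {m : ℕ} (v : Fin m → ℝ) : ℝ := ∑ i, |v i|

noncomputable def l2 {m : ℕ} (v : Fin m → ℝ) : ℝ := Real.sqrt (∑ i, v i ^ 2)

noncomputable def restr {m : ℕ} (K : Finset (Fin m)) (v : Fin m → ℝ) : Fin m → ℝ :=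
  fun i => if i ∈ K then v i else 0

lemma l1_nonneg {m : ℕ} (v : Fin m → ℝ) : 0 ≤ l1 v :=
  Finset.sum_nonneg fun _ _ => abs_nonneg _

lemma l2_nonneg {m : ℕ} (v : Fin m → ℝ) : 0 ≤ l2 v := Real.sqrt_nonneg _

lemma l2_triangle {m : ℕ} (u v : Fin m → ℝ) : l2 (u + v) ≤ l2 u + l2 v := by
  have h := norm_add_le ((WithLp.equiv 2 (Fin m → ℝ)).symm u) ((WithLp.equiv 2 (Fin m → ℝ)).symm v)
  simpa [EuclideanSpace.norm_eq, l2, sq_abs, WithLp.equiv_symm_apply, ← WithLp.toLp_add] using h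

lemma l2_neg {m : ℕ} (v : Fin m → ℝ) : l2 (-v) = l2 v := by
  simp [l2]

lemma l2_sub_le {m : ℕ} (u v : Fin m → ℝ) : l2 (u - v) ≤ l2 u + l2 v := by
  have := l2_triangle u (-v)
  rwa [l2_neg, ← sub_eq_add_neg] at this

lemma l1_restr {m : ℕ} (K : Finset (Fin m)) (v : Fin m → ℝ) :
    l1 (restr K v) = ∑ i ∈ K, |v i| := by
  rw [l1]
  rw [← Finset.sum_subset (Finset.subset_univ K) (f := fun i => |restr K v i|)]
  · exact Finset.sum_congr rfl fun i hi => by simp [restr, hi]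
  · intro i _ hi; simp [restr, hi]

lemma l1_le_sqrt_mul_l2 {m : ℕ} (v : Fin m → ℝ) : l1 v ≤ Real.sqrt m * l2 v := by
  have h := Finset.sum_mul_sq_le_sq_mul_sq Finset.univ (fun _ : Fin m => (1:ℝ)) (fun i => |v i|)
  simp only [one_mul, one_pow, Finset.sum_const, Finset.card_univ, Fintype.card_fin,
    nsmul_eq_mul, mul_one, sq_abs] at h
  have h1 : l1 v = Real.sqrt ((l1 v)^2) := (Real.sqrt_sq (l1_nonneg v)).symm
  calc l1 v = Real.sqrt ((l1 v)^2) := h1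
    _ ≤ Real.sqrt ((m:ℝ) * ∑ i, v i ^ 2) := Real.sqrt_le_sqrt h
    _ = Real.sqrt m * l2 v := by rw [Real.sqrt_mul (Nat.cast_nonneg m), l2]

lemma l1_Df_le {N : ℕ} (v : Fin N → ℝ) : l1 (Df v) ≤ 2 * l1 v := by
  have key : ∀ f : Fin (N-1) → Fin N, Function.Injective f →
      ∑ i : Fin (N-1), |v (f i)| ≤ ∑ j : Fin N, |v j| := by
    intro f hf
    calc ∑ i : Fin (N-1), |v (f i)| = ∑ j ∈ Finset.univ.map ⟨f, hf⟩, |v j| := by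
          rw [Finset.sum_map]; rfl
      _ ≤ ∑ j : Fin N, |v j| := Finset.sum_le_sum_of_subset_of_nonneg (Finset.subset_univ _)
          (fun i _ _ => abs_nonneg _)
  have h1 := key (fun i => ⟨i.val + 1, by have := i.isLt; omega⟩)
    (fun a b hab => by simpa [Fin.ext_iff] using hab)
  have h2 := key (fun i => ⟨i.val, by have := i.isLt; omega⟩)
    (fun a b hab => by simpa [Fin.ext_iff] using hab)
  calc l1 (Df v) ≤ ∑ i : Fin (N-1),
        (|v ⟨i.val+1, by have := i.isLt; omega⟩| + |v ⟨i.val, by have := i.isLt; omega⟩|) := by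
        apply Finset.sum_le_sum; intro i _; exact abs_sub _ _
    _ = (∑ i : Fin (N-1), |v ⟨i.val+1, by have := i.isLt; omega⟩|)
        + ∑ i : Fin (N-1), |v ⟨i.val, by have := i.isLt; omega⟩| := Finset.sum_add_distrib
    _ ≤ l1 v + l1 v := add_le_add h1 h2
    _ = 2 * l1 v := by ring

lemma exists_decomp (M N : ℕ) (A : Matrix (Fin M) (Fin N) ℝ) (w : Fin N → ℝ) :
    ∃ u : Fin M → ℝ, A.mulVec (Aᵀ.mulVec u) = A.mulVec w := by
  have hle : LinearMap.range (A * Aᵀ).mulVecLin ≤ LinearMap.range A.mulVecLin := by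
    rintro _ ⟨u, rfl⟩
    exact ⟨Aᵀ.mulVec u, by simp [mulVecLin_apply, ← mulVec_mulVec, mulVec_transpose]⟩
  have hrank : (A * Aᵀ).rank = A.rank := Matrix.rank_self_mul_transpose A
  have heq : LinearMap.range (A * Aᵀ).mulVecLin = LinearMap.range A.mulVecLin :=
    Submodule.eq_of_le_of_finrank_eq hle hrank
  have hmem : A.mulVec w ∈ LinearMap.range (A * Aᵀ).mulVecLin := by
    rw [heq]; exact ⟨w, rfl⟩
  obtain ⟨u, hu⟩ := hmem
  exact ⟨u, by rw [mulVec_mulVec]; exact hu⟩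

/-- Stability of noisy TV minimization under (a) the balanced null-space condition,
(b) the almost-Euclidean property of the kernel, and (c) a positive lower bound `σmin`
on the smallest singular value of `A` restricted to the range of `Aᵀ`. -/
theorem stmt16 (M N : ℕ) (A : Matrix (Fin M) (Fin N) ℝ)
    (δ C β σmin ε : ℝ) (hδ : 0 < δ) (hC0 : 0 < C) (hC1 : C < 1) (hβ : 0 < β)
    (hσ : 0 < σmin)
    -- (a) balanced null-space condition
    (hbal : ∀ w : Fin N → ℝ, A.mulVec w = 0 →
      ∀ 𝒦 : Finset (Fin (N - 1)), (𝒦.card : ℝ) ≤ δ * N →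
        l1 (restr 𝒦 (Df w)) ≤ C * l1 (restr 𝒦ᶜ (Df w)))
    -- (b) almost-Euclidean property for the TV norm
    (heuc : ∀ w : Fin N → ℝ, A.mulVec w = 0 → β * Real.sqrt N * l2 w ≤ l1 (Df w))
    -- (c) smallest singular value of A on the range of Aᵀ
    (hsv : ∀ u : Fin M → ℝ, σmin * l2 (Aᵀ.mulVec u) ≤ l2 (A.mulVec (Aᵀ.mulVec u)))
    (x xhat : Fin N → ℝ) (y : Fin M → ℝ)
    (hx : l2 (A.mulVec x - y) ≤ ε)
    (hfeas : l2 (A.mulVec xhat - y) ≤ ε)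
    (hmin : ∀ z : Fin N → ℝ, l2 (A.mulVec z - y) ≤ ε → l1 (Df xhat) ≤ l1 (Df z)) :
    l2 (x - xhat) ≤
      (2 * (1 + C) / (β * (1 - C))) *
          (⨅ 𝒦 : {𝒦 : Finset (Fin (N - 1)) // (𝒦.card : ℝ) ≤ δ * N},
            l1 (restr (𝒦.1)ᶜ (Df x))) / Real.sqrt N
        + (2 + 4 * (1 + C) / (β * (1 - C))) * ε / σmin := by
  have hC1' : 0 < 1 - C := by linarith
  have hε : 0 ≤ ε := le_trans (l2_nonneg _) hx
  set c : ℝ := 2 * (1 + C) / (β * (1 - C)) with hc_def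
  have hc : 0 < c := by positivity
  set E : ℝ := ε / σmin with hE_def
  have hEnn : 0 ≤ E := by positivity
  -- the error vector and its decomposition
  set w : Fin N → ℝ := x - xhat with hw_def
  obtain ⟨u, hu⟩ := exists_decomp M N A w
  set w₂ : Fin N → ℝ := Aᵀ.mulVec u with hw2_def
  set w₁ : Fin N → ℝ := w - w₂ with hw1_def
  have hker : A.mulVec w₁ = 0 := by
    rw [hw1_def, mulVec_sub, hu, sub_self]
  -- ‖A w‖₂ ≤ 2 ε
  have hAw : l2 (A.mulVec w) ≤ 2 * ε := by
    have : A.mulVec w = (A.mulVec x - y) - (A.mulVec xhat - y) := by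
      rw [hw_def, mulVec_sub]; abel
    rw [this]
    calc l2 ((A.mulVec x - y) - (A.mulVec xhat - y))
        ≤ l2 (A.mulVec x - y) + l2 (A.mulVec xhat - y) := l2_sub_le _ _
      _ ≤ 2 * ε := by linarith
  -- ‖w₂‖₂ ≤ 2 E
  have hw2 : l2 w₂ ≤ 2 * E := by
    have h1 := hsv u
    rw [hu] at h1
    have h2 : σmin * l2 w₂ ≤ 2 * ε := le_trans h1 hAw
    rw [hE_def, ← mul_div_assoc, le_div_iff₀ hσ, mul_comm]
    exact h2
  -- minimality
  have hM : l1 (Df xhat) ≤ l1 (Df x) := hmin x hx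
  -- pointwise difference identities
  have hDw : ∀ i, Df w i = Df x i - Df xhat i := by
    intro i; simp [Df, hw_def, Pi.sub_apply]; ring
  have hDw1 : ∀ i, Df w₁ i = Df w i - Df w₂ i := by
    intro i; simp [Df, hw1_def, Pi.sub_apply]; ring
  -- l1 Df w₂ ≤ 4 √N E
  have hdw2 : l1 (Df w₂) ≤ 4 * Real.sqrt N * E := by
    calc l1 (Df w₂) ≤ 2 * l1 w₂ := l1_Df_le w₂
      _ ≤ 2 * (Real.sqrt N * l2 w₂) := by
          have := l1_le_sqrt_mul_l2 w₂; linarith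
      _ ≤ 2 * (Real.sqrt N * (2 * E)) := by
          have hs : (0:ℝ) ≤ Real.sqrt N := Real.sqrt_nonneg _
          have := mul_le_mul_of_nonneg_left hw2 hs
          linarith
      _ = 4 * Real.sqrt N * E := by ring
  -- key per-K bound on β √N l2 w₁
  have key : ∀ K : Finset (Fin (N-1)), (K.card : ℝ) ≤ δ * N →
      β * Real.sqrt N * l2 w₁ ≤
        ((1+C)/(1-C)) * (2 * (∑ i ∈ Kᶜ, |Df x i|) + 4 * Real.sqrt N * E) := by
    intro K hK
    set a := ∑ i ∈ K, |Df w₁ i|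
    set b := ∑ i ∈ Kᶜ, |Df w₁ i|
    set s := ∑ i ∈ K, |Df w₂ i|
    set t := ∑ i ∈ Kᶜ, |Df w₂ i|
    set p := ∑ i ∈ K, |Df w i|
    set q := ∑ i ∈ Kᶜ, |Df w i|
    set e := ∑ i ∈ Kᶜ, |Df x i|
    have hbnn : 0 ≤ b := Finset.sum_nonneg fun _ _ => abs_nonneg _
    -- minimality step: q ≤ 2e + p
    have step1 : q ≤ 2 * e + p := by
      have hA1 : (∑ i ∈ K, |Df x i|) - p ≤ ∑ i ∈ K, |Df xhat i| := by
        rw [← Finset.sum_sub_distrib]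
        apply Finset.sum_le_sum
        intro i _
        have h := abs_sub_abs_le_abs_sub (Df x i) (Df w i)
        have : Df x i - Df w i = Df xhat i := by rw [hDw i]; ring
        rw [this] at h; linarith
      have hA2 : q - e ≤ ∑ i ∈ Kᶜ, |Df xhat i| := by
        rw [← Finset.sum_sub_distrib]
        apply Finset.sum_le_sum
        intro i _
        have h := abs_sub_abs_le_abs_sub (Df w i) (Df x i)
        have : Df w i - Df x i = -(Df xhat i) := by rw [hDw i]; ring
        rw [this, abs_neg] at h; linarith
      have hs1 : (∑ i ∈ K, |Df xhat i|) + (∑ i ∈ Kᶜ, |Df xhat i|) = l1 (Df xhat) :=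
        Finset.sum_add_sum_compl K _
      have hs2 : (∑ i ∈ K, |Df x i|) + e = l1 (Df x) :=
        Finset.sum_add_sum_compl K _
      linarith
    -- balanced null-space condition: a ≤ C b
    have step2 : a ≤ C * b := by
      have h := hbal w₁ hker K hK
      rwa [l1_restr, l1_restr] at h
    -- triangle pieces
    have hba : b ≤ q + t := by
      rw [← Finset.sum_add_distrib]
      apply Finset.sum_le_sum
      intro i _
      rw [hDw1 i]; exact abs_sub _ _
    have hpa : p ≤ a + s := by
      rw [← Finset.sum_add_distrib]
      apply Finset.sum_le_sum
      intro i _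
      have : Df w i = Df w₁ i + Df w₂ i := by rw [hDw1 i]; ring
      rw [this]; exact abs_add_le _ _
    have hst : s + t = l1 (Df w₂) := Finset.sum_add_sum_compl K _
    -- combine: (1-C) b ≤ 2 e + l1 (Df w₂)
    have hb : (1 - C) * b ≤ 2 * e + (4 * Real.sqrt N * E) := by nlinarith
    have hDfw1 : l1 (Df w₁) ≤ (1 + C) * b := by
      have : a + b = l1 (Df w₁) := Finset.sum_add_sum_compl K _
      linarith
    have heu := heuc w₁ hker
    calc β * Real.sqrt N * l2 w₁ ≤ l1 (Df w₁) := heu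
      _ ≤ (1 + C) * b := hDfw1
      _ ≤ ((1+C)/(1-C)) * (2 * e + 4 * Real.sqrt N * E) := by
          rw [div_mul_eq_mul_div, le_div_iff₀ hC1']
          nlinarith
  -- final bound, per K, in the shape of the goal
  have final : ∀ K : Finset (Fin (N-1)), (K.card : ℝ) ≤ δ * N → N ≠ 0 →
      l2 w ≤ c * l1 (restr Kᶜ (Df x)) / Real.sqrt N + (2 + 4 * (1 + C) / (β * (1 - C))) * E := by
    intro K hK hN
    have hsN : (0:ℝ) < Real.sqrt N := Real.sqrt_pos.mpr (by positivity)
    have hkey := key K hK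
    set e := ∑ i ∈ Kᶜ, |Df x i| with he_def
    have hre : l1 (restr Kᶜ (Df x)) = e := l1_restr _ _
    have hw1b : l2 w₁ ≤ ((1+C)/(1-C)) * (2 * e + 4 * Real.sqrt N * E) / (β * Real.sqrt N) := by
      rw [le_div_iff₀ (by positivity)]
      calc l2 w₁ * (β * Real.sqrt N) = β * Real.sqrt N * l2 w₁ := by ring
        _ ≤ _ := hkey
    have hident : ((1+C)/(1-C)) * (2 * e + 4 * Real.sqrt N * E) / (β * Real.sqrt N)
        = c * e / Real.sqrt N + (4 * (1 + C) / (β * (1 - C))) * E := by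
      rw [hc_def]
      field_simp
    have htri : l2 w ≤ l2 w₁ + l2 w₂ := by
      have : w = w₁ + w₂ := by rw [hw1_def]; abel
      calc l2 w = l2 (w₁ + w₂) := by rw [← this]
        _ ≤ l2 w₁ + l2 w₂ := l2_triangle _ _
    rw [hre]
    calc l2 w ≤ l2 w₁ + l2 w₂ := htri
      _ ≤ (c * e / Real.sqrt N + (4 * (1 + C) / (β * (1 - C))) * E) + 2 * E := by
          rw [← hident]; exact add_le_add hw1b hw2
      _ = c * e / Real.sqrt N + (2 + 4 * (1 + C) / (β * (1 - C))) * E := by ring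
  -- dispatch N = 0
  rcases Nat.eq_zero_or_pos N with hN0 | hNpos
  · subst hN0
    have hL : l2 w = 0 := by
      rw [l2]
      simp
    rw [hL]
    have : Real.sqrt (0 : ℕ) = 0 := by norm_num
    rw [this, div_zero, zero_add]
    positivity
  · -- infimum manipulation
    have hNe : N ≠ 0 := hNpos.ne'
    have hsN : (0:ℝ) < Real.sqrt N := Real.sqrt_pos.mpr (by positivity)
    set R : ℝ := (2 + 4 * (1 + C) / (β * (1 - C))) * E with hR_def
    have hgoalR : (2 + 4 * (1 + C) / (β * (1 - C))) * ε / σmin = R := by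
      rw [hR_def, hE_def]; ring
    rw [hgoalR]
    have hne : Nonempty {𝒦 : Finset (Fin (N - 1)) // (𝒦.card : ℝ) ≤ δ * N} :=
      ⟨⟨∅, by simp; positivity⟩⟩
    set I := ⨅ 𝒦 : {𝒦 : Finset (Fin (N - 1)) // (𝒦.card : ℝ) ≤ δ * N},
        l1 (restr (𝒦.1)ᶜ (Df x)) with hI_def
    have hIle : (l2 w - R) * Real.sqrt N / c ≤ I := by
      apply le_ciInf
      intro K
      have hfin := final K.1 K.2 hNe
      have h1 : l2 w - R ≤ c * l1 (restr (K.1)ᶜ (Df x)) / Real.sqrt N := by linarith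
      have h2 := mul_le_mul_of_nonneg_right h1 hsN.le
      rw [div_mul_cancel₀ _ hsN.ne'] at h2
      rw [div_le_iff₀ hc]
      calc (l2 w - R) * Real.sqrt N ≤ c * l1 (restr (K.1)ᶜ (Df x)) := h2
        _ = l1 (restr (K.1)ᶜ (Df x)) * c := mul_comm _ _
    rw [div_le_iff₀ hc] at hIle
    have h4 : l2 w - R ≤ I * c / Real.sqrt N := by rw [le_div_iff₀ hsN]; exact hIle
    rw [show c * I / Real.sqrt N = I * c / Real.sqrt N from by ring]
    linarith
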